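/- Let G₁ and G₂ be disjoint graphs on n₁ and n₂ vertices respectively, and let G = G₁ + G₂ be their join. Then the characteristic polynomial of the Laplacian satisfies Θ(G₁+G₂, x) · (x - n₁)(x - n₂) = x(x - n₁ - n₂) · Θ(G₁, x - n₂) · Θ(G₂, x - n₁), where Θ(H, x) = det(xI - L(H)). -/

import Mathlib

open Matrix Polynomial

/-- The join `G + H` of two disjoint graphs: all edges of `G` and `H`, together with all edges
between the two vertex sets. -/
def graphJoin {α β : Type*} (G : SimpleGraph α) (H : SimpleGraph β) : SimpleGraph (α ⊕ β) where
  Adj u v := match u, v with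
    | Sum.inl u, Sum.inl v => G.Adj u v
    | Sum.inr u, Sum.inr v => H.Adj u v
    | Sum.inl _, Sum.inr _ => True
    | Sum.inr _, Sum.inl _ => True
  symm := ⟨fun u v => match u, v with
    | Sum.inl _, Sum.inl _ => G.adj_symm
    | Sum.inr _, Sum.inr _ => H.adj_symm
    | Sum.inl _, Sum.inr _ => fun _ => trivial
    | Sum.inr _, Sum.inl _ => fun _ => trivial⟩
  loopless := ⟨fun u => match u with
    | Sum.inl _ => G.irrefl
    | Sum.inr _ => H.irrefl⟩

instance {α β : Type*} (G : SimpleGraph α) (H : SimpleGraph β)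
    [DecidableRel G.Adj] [DecidableRel H.Adj] : DecidableRel (graphJoin G H).Adj :=
  fun u v => match u, v with
    | Sum.inl u, Sum.inl v => inferInstanceAs (Decidable (G.Adj u v))
    | Sum.inr u, Sum.inr v => inferInstanceAs (Decidable (H.Adj u v))
    | Sum.inl _, Sum.inr _ => inferInstanceAs (Decidable True)
    | Sum.inr _, Sum.inl _ => inferInstanceAs (Decidable True)

lemma col_mul_row_const {n K : Type*} [Fintype n] [NonAssocSemiring K] (t : K) :
    (Matrix.replicateCol Unit (fun _ : n => t)) * (Matrix.replicateRow Unit (fun _ : n => (1:K))) =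
      Matrix.of (fun _ _ : n => t) := by
  ext i j
  simp [Matrix.mul_apply]

lemma key_det {n : Type*} [Fintype n] [DecidableEq n] {K : Type*} [Field K]
    (M : Matrix n n K) (c t : K) (h : M *ᵥ (fun _ => 1) = fun _ => c)
    (hM : M.det ≠ 0) (hc : c ≠ 0) :
    c * (M + Matrix.of (fun _ _ => t)).det = (c + t * Fintype.card n) * M.det := by
  have hU : IsUnit M.det := Ne.isUnit hM
  have hinv : M⁻¹ *ᵥ (fun _ => (1:K)) = fun _ => c⁻¹ := by
    have h2 : M⁻¹ *ᵥ (M *ᵥ (fun _ => (1:K))) = fun _ => 1 := by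
      rw [Matrix.mulVec_mulVec, Matrix.nonsing_inv_mul M hU, Matrix.one_mulVec]
    rw [h] at h2
    have hsm : (fun _ : n => c) = c • (fun _ : n => (1:K)) := by ext; simp
    rw [hsm, Matrix.mulVec_smul] at h2
    funext i
    have h3 := congrFun h2 i
    simp only [Pi.smul_apply, smul_eq_mul] at h3
    exact (inv_eq_of_mul_eq_one_right h3).symm
  have e1 : ((1 : Matrix Unit Unit K) + Matrix.replicateRow Unit (fun _ : n => (1:K)) * M⁻¹ *
       Matrix.replicateCol Unit (fun _ : n => t)).det = 1 + t * (Fintype.card n) * c⁻¹ := by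
    rw [Matrix.det_unique]
    simp only [Matrix.add_apply, Matrix.one_apply_eq]
    rw [Matrix.mul_assoc, ← Matrix.replicateCol_mulVec, Matrix.replicateRow_mul_replicateCol_apply]
    have hv : M⁻¹ *ᵥ (fun _ : n => t) = fun _ => t * c⁻¹ := by
      have : (fun _ : n => t) = t • (fun _ : n => (1:K)) := by ext; simp
      rw [this, Matrix.mulVec_smul, hinv]
      ext; simp [mul_comm]
    rw [hv]
    simp [dotProduct, Finset.sum_const, mul_assoc, mul_comm]
    ring
  rw [← col_mul_row_const, Matrix.det_add_replicateCol_mul_replicateRow hU, e1]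
  field_simp

lemma charpoly_ringHom {n R K : Type*} [Fintype n] [DecidableEq n] [CommRing R] [CommRing K]
    (M : Matrix n n R) (ψ : R[X] →+* K) :
    ψ M.charpoly = ((ψ X) • (1 : Matrix n n K) - M.map (ψ.comp C)).det := by
  rw [Matrix.charpoly, RingHom.map_det]
  congr 1
  ext i j
  by_cases h : i = j <;>
    simp [Matrix.charmatrix_apply, Matrix.diagonal, h, Matrix.one_apply, Matrix.smul_apply]

lemma lapMatrix_map {V : Type*} [Fintype V] [DecidableEq V] (G : SimpleGraph V)
    [DecidableRel G.Adj] {K : Type*} [CommRing K] (f : ℝ →+* K) :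
    (G.lapMatrix ℝ).map f = G.lapMatrix K := by
  ext i j
  simp [SimpleGraph.lapMatrix, SimpleGraph.degMatrix, SimpleGraph.adjMatrix, Matrix.diagonal,
    Matrix.map_apply, apply_ite f]

lemma comp_X_sub_C_ne_zero {R : Type*} [CommRing R] [Nontrivial R] {P : R[X]} (hP : P ≠ 0)
    (a : R) : P.comp (X - C a) ≠ 0 := by
  intro h
  apply hP
  have h2 := congrArg (fun Q : R[X] => Q.comp (X + C a)) h
  simp only [Polynomial.zero_comp] at h2
  rwa [Polynomial.comp_assoc, Polynomial.sub_comp, Polynomial.X_comp, Polynomial.C_comp,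
    add_sub_cancel_right, Polynomial.comp_X] at h2

lemma lapMatrix_entry {V : Type*} [Fintype V] [DecidableEq V] (G : SimpleGraph V)
    [DecidableRel G.Adj] {K : Type*} [AddGroupWithOne K] (i j : V) :
    (G.lapMatrix K) i j =
      (if i = j then (G.degree i : K) else 0) - (if G.Adj i j then 1 else 0) := by
  simp [SimpleGraph.lapMatrix, SimpleGraph.degMatrix, SimpleGraph.adjMatrix, Matrix.diagonal]

set_option maxHeartbeats 3200000 in
/-- Mohar's formula: for disjoint graphs `G₁`, `G₂` on `n₁`, `n₂` vertices, the characteristic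
polynomial `Θ(H, x) = det(xI - L(H))` of the Laplacian of the join satisfies
`Θ(G₁+G₂, x)·(x-n₁)(x-n₂) = x(x-n₁-n₂)·Θ(G₁, x-n₂)·Θ(G₂, x-n₁)`. -/
theorem lap_charpoly_join {V₁ V₂ : Type*} [Fintype V₁] [Fintype V₂]
    [DecidableEq V₁] [DecidableEq V₂]
    (G₁ : SimpleGraph V₁) (G₂ : SimpleGraph V₂)
    [DecidableRel G₁.Adj] [DecidableRel G₂.Adj] :
    ((graphJoin G₁ G₂).lapMatrix ℝ).charpoly *
        ((X - C (Fintype.card V₁ : ℝ)) * (X - C (Fintype.card V₂ : ℝ))) =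
      X * (X - C ((Fintype.card V₁ : ℝ) + (Fintype.card V₂ : ℝ))) *
        ((G₁.lapMatrix ℝ).charpoly.comp (X - C (Fintype.card V₂ : ℝ))) *
        ((G₂.lapMatrix ℝ).charpoly.comp (X - C (Fintype.card V₁ : ℝ))) := by
  classical
  set n1 : ℝ := (Fintype.card V₁ : ℝ) with hn1
  set n2 : ℝ := (Fintype.card V₂ : ℝ) with hn2
  set K := FractionRing (Polynomial ℝ) with hK
  set φ : Polynomial ℝ →+* K := algebraMap (Polynomial ℝ) K with hφdef
  have hφ : Function.Injective φ := IsFractionRing.injective (Polynomial ℝ) K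
  apply hφ
  set x : K := φ X with hx
  set a1 : K := (Fintype.card V₁ : K) with ha1
  set a2 : K := (Fintype.card V₂ : K) with ha2
  have hφC1 : φ (C n1) = a1 := by rw [hn1]; push_cast; simp [ha1]
  have hφC2 : φ (C n2) = a2 := by rw [hn2]; push_cast; simp [ha2]
  -- matrices over K
  set M1 : Matrix V₁ V₁ K := (x - a2) • (1 : Matrix V₁ V₁ K) - G₁.lapMatrix K with hM1
  set M2 : Matrix V₂ V₂ K := (x - a1) • (1 : Matrix V₂ V₂ K) - G₂.lapMatrix K with hM2
  set D1 : Matrix V₁ V₁ K := M1 + Matrix.of (fun _ _ : V₁ => (-1 : K)) with hD1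
  set D2 : Matrix V₂ V₂ K := M2 + Matrix.of (fun _ _ : V₂ => (-1 : K)) with hD2
  set BD : Matrix (V₁ ⊕ V₂) (V₁ ⊕ V₂) K := Matrix.fromBlocks D1 0 0 D2 with hBD
  -- charpoly translations
  have hdeg1 : ∀ v : V₁, ((graphJoin G₁ G₂).degree (Sum.inl v) : K) = (G₁.degree v : K) + a2 := by
    intro v
    rw [SimpleGraph.degree_eq_sum_if_adj, SimpleGraph.degree_eq_sum_if_adj,
      Fintype.sum_sum_type]
    have e1 : ∀ u : V₁, (if (graphJoin G₁ G₂).Adj (Sum.inl v) (Sum.inl u) then (1:K) else 0) =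
        (if G₁.Adj v u then (1:K) else 0) := fun u => rfl
    have e2 : ∀ u : V₂, (if (graphJoin G₁ G₂).Adj (Sum.inl v) (Sum.inr u) then (1:K) else 0) =
        1 := fun u => rfl
    simp only [e1, e2, Finset.sum_const, Finset.card_univ, nsmul_eq_mul, mul_one, ha2]
  have hdeg2 : ∀ v : V₂, ((graphJoin G₁ G₂).degree (Sum.inr v) : K) = (G₂.degree v : K) + a1 := by
    intro v
    rw [SimpleGraph.degree_eq_sum_if_adj, SimpleGraph.degree_eq_sum_if_adj,
      Fintype.sum_sum_type]
    have e1 : ∀ u : V₁, (if (graphJoin G₁ G₂).Adj (Sum.inr v) (Sum.inl u) then (1:K) else 0) =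
        1 := fun u => rfl
    have e2 : ∀ u : V₂, (if (graphJoin G₁ G₂).Adj (Sum.inr v) (Sum.inr u) then (1:K) else 0) =
        (if G₂.Adj v u then (1:K) else 0) := fun u => rfl
    simp only [e1, e2, Finset.sum_const, Finset.card_univ, nsmul_eq_mul, mul_one, ha1]
    ring
  have hblock : x • (1 : Matrix (V₁ ⊕ V₂) (V₁ ⊕ V₂) K) - (graphJoin G₁ G₂).lapMatrix K =
      BD + Matrix.of (fun _ _ => (1:K)) := by
    rw [hBD, hD1, hD2, hM1, hM2]
    ext i j
    rcases i with u|u <;> rcases j with v|v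
    · simp only [Matrix.sub_apply, Matrix.smul_apply, Matrix.add_apply, Matrix.of_apply,
        Matrix.fromBlocks_apply₁₁, Matrix.one_apply, smul_eq_mul, Sum.inl.injEq]
      rw [lapMatrix_entry, lapMatrix_entry, hdeg1]
      have hadj : (graphJoin G₁ G₂).Adj (Sum.inl u) (Sum.inl v) ↔ G₁.Adj u v := Iff.rfl
      rw [if_congr hadj rfl rfl, if_congr (show Sum.inl u = (Sum.inl v : V₁ ⊕ V₂) ↔ u = v by simp) rfl rfl]
      by_cases h : u = v <;> simp [h] <;> ring
    · simp only [Matrix.sub_apply, Matrix.smul_apply, Matrix.add_apply, Matrix.of_apply,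
        Matrix.fromBlocks_apply₁₂, Matrix.one_apply, smul_eq_mul, Matrix.zero_apply]
      rw [lapMatrix_entry]
      have hadj : (graphJoin G₁ G₂).Adj (Sum.inl u) (Sum.inr v) ↔ True := Iff.rfl
      rw [if_congr hadj rfl rfl, if_congr (show (Sum.inl u : V₁ ⊕ V₂) = Sum.inr v ↔ False by simp) rfl rfl]
      simp
    · simp only [Matrix.sub_apply, Matrix.smul_apply, Matrix.add_apply, Matrix.of_apply,
        Matrix.fromBlocks_apply₂₁, Matrix.one_apply, smul_eq_mul, Matrix.zero_apply]
      rw [lapMatrix_entry]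
      have hadj : (graphJoin G₁ G₂).Adj (Sum.inr u) (Sum.inl v) ↔ True := Iff.rfl
      rw [if_congr hadj rfl rfl, if_congr (show (Sum.inr u : V₁ ⊕ V₂) = Sum.inl v ↔ False by simp) rfl rfl]
      simp
    · simp only [Matrix.sub_apply, Matrix.smul_apply, Matrix.add_apply, Matrix.of_apply,
        Matrix.fromBlocks_apply₂₂, Matrix.one_apply, smul_eq_mul, Sum.inr.injEq]
      rw [lapMatrix_entry, lapMatrix_entry, hdeg2]
      have hadj : (graphJoin G₁ G₂).Adj (Sum.inr u) (Sum.inr v) ↔ G₂.Adj u v := Iff.rfl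
      rw [if_congr hadj rfl rfl, if_congr (show Sum.inr u = (Sum.inr v : V₁ ⊕ V₂) ↔ u = v by simp) rfl rfl]
      by_cases h : u = v <;> simp [h] <;> ring
  have h_join : φ ((graphJoin G₁ G₂).lapMatrix ℝ).charpoly =
      (BD + Matrix.of (fun _ _ => (1:K))).det := by
    rw [charpoly_ringHom _ φ, lapMatrix_map, ← hx, hblock]
  have h_1 : φ ((G₁.lapMatrix ℝ).charpoly.comp (X - C n2)) = M1.det := by
    have h := charpoly_ringHom (G₁.lapMatrix ℝ) (φ.comp (Polynomial.compRingHom (X - C n2)))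
    have hψC : (φ.comp (Polynomial.compRingHom (X - C n2))).comp C = φ.comp C := by
      ext r
      simp [Polynomial.C_comp]
    have hψX : (φ.comp (Polynomial.compRingHom (X - C n2))) X = x - a2 := by
      simp only [RingHom.comp_apply, Polynomial.coe_compRingHom_apply, Polynomial.X_comp,
        map_sub, hφC2, hx]
    rw [hψC, hψX, lapMatrix_map, ← hM1] at h
    exact h
  have h_2 : φ ((G₂.lapMatrix ℝ).charpoly.comp (X - C n1)) = M2.det := by
    have h := charpoly_ringHom (G₂.lapMatrix ℝ) (φ.comp (Polynomial.compRingHom (X - C n1)))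
    have hψC : (φ.comp (Polynomial.compRingHom (X - C n1))).comp C = φ.comp C := by
      ext r
      simp [Polynomial.C_comp]
    have hψX : (φ.comp (Polynomial.compRingHom (X - C n1))) X = x - a1 := by
      simp only [RingHom.comp_apply, Polynomial.coe_compRingHom_apply, Polynomial.X_comp,
        map_sub, hφC1, hx]
    rw [hψC, hψX, lapMatrix_map, ← hM2] at h
    exact h
  -- row sums
  have hM1row : M1 *ᵥ (fun _ => 1) = fun _ => (x - a2) := by
    rw [hM1, Matrix.sub_mulVec, Matrix.smul_mulVec, Matrix.one_mulVec,
      SimpleGraph.lapMatrix_mulVec_const_eq_zero]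
    funext i; simp
  have hM2row : M2 *ᵥ (fun _ => 1) = fun _ => (x - a1) := by
    rw [hM2, Matrix.sub_mulVec, Matrix.smul_mulVec, Matrix.one_mulVec,
      SimpleGraph.lapMatrix_mulVec_const_eq_zero]
    funext i; simp
  have hD1row : D1 *ᵥ (fun _ => 1) = fun _ => (x - a1 - a2) := by
    rw [hD1, Matrix.add_mulVec, hM1row]
    funext i
    simp [Matrix.mulVec, dotProduct, ← ha1]
    ring
  have hD2row : D2 *ᵥ (fun _ => 1) = fun _ => (x - a1 - a2) := by
    rw [hD2, Matrix.add_mulVec, hM2row]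
    funext i
    simp [Matrix.mulVec, dotProduct, ← ha2]
    ring
  have hBDrow : BD *ᵥ (fun _ => 1) = fun _ => (x - a1 - a2) := by
    have hone : (fun _ : V₁ ⊕ V₂ => (1:K)) = Sum.elim (fun _ => 1) (fun _ => 1) := by
      funext i; cases i <;> rfl
    rw [hBD, hone, Matrix.fromBlocks_mulVec]
    funext i
    cases i <;> simp [Function.comp_def, Matrix.zero_mulVec, hD1row, hD2row]
  -- nonvanishing
  have h_xa2 : x - a2 ≠ 0 := by
    rw [hx, ← hφC2, ← map_sub]
    simp only [ne_eq, map_eq_zero_iff φ hφ]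
    exact Polynomial.X_sub_C_ne_zero n2
  have h_xa1 : x - a1 ≠ 0 := by
    rw [hx, ← hφC1, ← map_sub]
    simp only [ne_eq, map_eq_zero_iff φ hφ]
    exact Polynomial.X_sub_C_ne_zero n1
  have hc : x - a1 - a2 ≠ 0 := by
    have heq : x - a1 - a2 = φ (X - C (n1 + n2)) := by
      rw [map_sub, Polynomial.C_add, map_add, hφC1, hφC2, ← hx]
      ring
    rw [heq]
    simp only [ne_eq, map_eq_zero_iff φ hφ]
    exact Polynomial.X_sub_C_ne_zero (n1 + n2)
  have hM1ne : M1.det ≠ 0 := by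
    rw [← h_1]
    simp only [ne_eq, map_eq_zero_iff φ hφ]
    exact comp_X_sub_C_ne_zero (Matrix.charpoly_monic _).ne_zero n2
  have hM2ne : M2.det ≠ 0 := by
    rw [← h_2]
    simp only [ne_eq, map_eq_zero_iff φ hφ]
    exact comp_X_sub_C_ne_zero (Matrix.charpoly_monic _).ne_zero n1
  -- key determinant identities
  have k1 : (x - a2) * D1.det = ((x - a2) + (-1) * a1) * M1.det := by
    have := key_det M1 (x - a2) (-1) hM1row hM1ne h_xa2
    rw [hD1]; rw [this, ha1]
  have k2 : (x - a1) * D2.det = ((x - a1) + (-1) * a2) * M2.det := by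
    have := key_det M2 (x - a1) (-1) hM2row hM2ne h_xa1
    rw [hD2]; rw [this, ha2]
  have hD1ne : D1.det ≠ 0 := by
    intro h
    rw [h, mul_zero] at k1
    have hne : (x - a2) + (-1) * a1 ≠ 0 := by
      have : (x - a2) + (-1) * a1 = x - a1 - a2 := by ring
      rw [this]; exact hc
    exact (mul_ne_zero hne hM1ne) k1.symm
  have hD2ne : D2.det ≠ 0 := by
    intro h
    rw [h, mul_zero] at k2
    have hne : (x - a1) + (-1) * a2 ≠ 0 := by
      have : (x - a1) + (-1) * a2 = x - a1 - a2 := by ring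
      rw [this]; exact hc
    exact (mul_ne_zero hne hM2ne) k2.symm
  have hBDdet : BD.det = D1.det * D2.det := by
    rw [hBD, Matrix.det_fromBlocks_zero₂₁]
  have hBDne : BD.det ≠ 0 := by rw [hBDdet]; exact mul_ne_zero hD1ne hD2ne
  have kB : (x - a1 - a2) * (BD + Matrix.of (fun _ _ => (1:K))).det =
      ((x - a1 - a2) + 1 * (a1 + a2)) * (D1.det * D2.det) := by
    have := key_det BD (x - a1 - a2) 1 hBDrow hBDne hc
    rw [this, hBDdet, Fintype.card_sum]
    push_cast
    ring
  -- final assembly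
  simp only [_root_.map_mul, map_sub]
  rw [h_join, h_1, h_2, hφC1, hφC2]
  have hφC12 : φ (C (n1 + n2)) = a1 + a2 := by
    rw [Polynomial.C_add, map_add, hφC1, hφC2]
  rw [hφC12, ← hx]
  apply mul_left_cancel₀ (mul_ne_zero hc (mul_ne_zero h_xa1 h_xa2))
  linear_combination ((x-a1)*(x-a2))^2 * kB + x*(x-a1)^2*(x-a2)*D2.det * k1 +
    x*(x-a1)*(x-a2)*(x-a1-a2)*M1.det * k2
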